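/- For all n ≥ 0: F_{3n}(1, -1/q, q) = 0, F_{3n+1}(1, -1/q, q) = (-1)^n q^{n(3n-1)/2}, and F_{3n+2}(1, -1/q, q) = (-1)^n q^{n(3n+1)/2}. -/

import Mathlib

open Finset

noncomputable section

abbrev K : Type := RatFunc ℚ

def q : K := RatFunc.X

def qint (a : K) (m : ℕ) : K := ∑ i ∈ range m, a ^ i

def qfact (a : K) (m : ℕ) : K := ∏ i ∈ range m, qint a (i + 1)

def qbinom (a : K) (n k : ℕ) : K :=
  if k ≤ n then qfact a n / (qfact a k * qfact a (n - k)) else 0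

/-- q-Fibonacci polynomials F_n(x,s,q) with base `a`. -/
def qF (a x s : K) : ℕ → K
  | 0 => 0
  | n + 1 => ∑ k ∈ range (n / 2 + 1),
      a ^ (k * (k + 1) / 2) * qbinom a (n - k) k * s ^ k * x ^ (n - 2 * k)

/-- q-Lucas polynomials L_n(x,s,q) with base `a` (L_0 = 2). -/
def qL (a x s : K) (n : ℕ) : K :=
  if n = 0 then 2 else
  ∑ k ∈ range (n / 2 + 1),
    a ^ (k * (k - 1) / 2) * (qint a n / qint a (n - k)) * qbinom a (n - k) k
      * s ^ k * x ^ (n - 2 * k)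

/-- Starred variant: L*_0 = 1, L*_n = L_n for n > 0. -/
def qLs (a x s : K) (n : ℕ) : K := if n = 0 then 1 else qL a x s n

/-- Rogers-Szegő polynomial. -/
def rs (a x y : K) (m : ℕ) : K := ∑ j ∈ range (m + 1), qbinom a m j * x ^ j * y ^ (m - j)

/-- q-Pochhammer (q;q)_m. -/
def qpoch (a : K) (m : ℕ) : K := ∏ j ∈ range m, (1 - a ^ (j + 1))


lemma q_ne : (q : K) ≠ 0 := RatFunc.X_ne_zero

lemma qint_ne (m : ℕ) (hm : 1 ≤ m) : qint q m ≠ 0 := by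
  have : qint q m = algebraMap (Polynomial ℚ) K (∑ i ∈ range m, Polynomial.X ^ i) := by
    simp [qint, q, map_sum, map_pow, RatFunc.algebraMap_X]
  rw [this]
  intro h
  rw [FaithfulSMul.algebraMap_eq_zero_iff] at h
  have := congrArg (Polynomial.eval 1) h
  simp [Polynomial.eval_finset_sum] at this
  omega

lemma qfact_ne (m : ℕ) : qfact q m ≠ 0 := by
  induction m with
  | zero => simp [qfact]
  | succ n ih =>
    rw [qfact, Finset.prod_range_succ, ← qfact]
    exact mul_ne_zero ih (qint_ne _ (by omega))

lemma qint_add (m n : ℕ) : qint q (m + n) = qint q m + q ^ m * qint q n := by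
  simp [qint, Finset.sum_range_add, Finset.mul_sum, pow_add]

lemma qfact_succ (m : ℕ) : qfact q (m + 1) = qfact q m * qint q (m + 1) := by
  rw [qfact, Finset.prod_range_succ, ← qfact]

lemma pascal1 (n k : ℕ) :
    qbinom q (n + 1) (k + 1) = qbinom q n (k + 1) + q ^ (n - k) * qbinom q n k := by
  rcases lt_trichotomy k n with h | rfl | h
  · have h1 : k + 1 ≤ n + 1 := by omega
    have h2 : k + 1 ≤ n := by omega
    have h3 : k ≤ n := by omega
    rw [qbinom, if_pos h1, qbinom, if_pos h2, qbinom, if_pos h3]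
    have e1 : n + 1 - (k + 1) = n - k := by omega
    have e2 : n - (k + 1) = n - k - 1 := by omega
    rw [e1, e2]
    have e3 : n - k = (n - k - 1) + 1 := by omega
    have hsplit : qint q (n + 1) = qint q (n - k) + q ^ (n - k) * qint q (k + 1) := by
      have : n + 1 = (n - k) + (k + 1) := by omega
      rw [this, qint_add]
    rw [qfact_succ n, e3, qfact_succ (n - k - 1), qfact_succ k, ← e3, hsplit]
    have A := qfact_ne n
    have B := qfact_ne k
    have C := qfact_ne (n - k - 1)
    have D := qint_ne (k + 1) (by omega)
    have E := qint_ne (n - k) (by rw [e3]; omega)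
    field_simp
  · have h1 : k + 1 ≤ k + 1 := le_refl _
    rw [qbinom, if_pos h1, qbinom, if_neg (by omega), qbinom, if_pos (le_refl k)]
    simp only [Nat.sub_self, tsub_self]
    have : qfact q 0 = 1 := by simp [qfact]
    rw [this]
    have A := qfact_ne (k + 1)
    have B := qfact_ne k
    field_simp
    simp
  · rw [qbinom, if_neg (by omega), qbinom, if_neg (by omega), qbinom, if_neg (by omega)]
    ring

lemma pascal2 (n k : ℕ) :
    qbinom q (n + 1) (k + 1) = q ^ (k + 1) * qbinom q n (k + 1) + qbinom q n k := by
  rcases lt_trichotomy k n with h | rfl | h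
  · have h1 : k + 1 ≤ n + 1 := by omega
    have h2 : k + 1 ≤ n := by omega
    have h3 : k ≤ n := by omega
    rw [qbinom, if_pos h1, qbinom, if_pos h2, qbinom, if_pos h3]
    have e1 : n + 1 - (k + 1) = n - k := by omega
    have e2 : n - (k + 1) = n - k - 1 := by omega
    rw [e1, e2]
    have e3 : n - k = (n - k - 1) + 1 := by omega
    have hsplit : qint q (n + 1) = qint q (k + 1) + q ^ (k + 1) * qint q (n - k) := by
      have : n + 1 = (k + 1) + (n - k) := by omega
      rw [this, qint_add]
    rw [qfact_succ n, e3, qfact_succ (n - k - 1), qfact_succ k, ← e3, hsplit]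
    have A := qfact_ne n
    have B := qfact_ne k
    have C := qfact_ne (n - k - 1)
    have D := qint_ne (k + 1) (by omega)
    have E := qint_ne (n - k) (by rw [e3]; omega)
    field_simp
    ring
  · rw [qbinom, if_pos (le_refl _), qbinom, if_neg (by omega), qbinom, if_pos (le_refl k)]
    simp only [Nat.sub_self, tsub_self]
    have : qfact q 0 = 1 := by simp [qfact]
    rw [this]
    have A := qfact_ne (k + 1)
    have B := qfact_ne k
    field_simp
    simp
  · rw [qbinom, if_neg (by omega), qbinom, if_neg (by omega), qbinom, if_neg (by omega)]
    ring


lemma qbinom_zero (n : ℕ) : qbinom q n 0 = 1 := by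
  rw [qbinom, if_pos (Nat.zero_le n)]
  have h0 : qfact q 0 = 1 := by simp [qfact]
  rw [h0, one_mul, Nat.sub_zero, div_self (qfact_ne n)]

lemma qbinom_of_lt {n k : ℕ} (h : n < k) : qbinom q n k = 0 := by
  rw [qbinom, if_neg (by omega)]

lemma Tsucc (k : ℕ) : (k + 1) * (k + 1 + 1) / 2 = k * (k + 1) / 2 + (k + 1) := by
  have h : (k + 1) * (k + 1 + 1) = k * (k + 1) + 2 * (k + 1) := by ring
  omega

lemma qF_rec1 (x s : K) (m : ℕ) :
    qF q x s (m + 3) =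
      x * qF q x s (m + 2) + q ^ (m + 1) * s * qF q x (s / q) (m + 1) := by
  simp only [qF]
  have hN : (m + 2) / 2 = m / 2 + 1 := by omega
  rw [hN]
  have hext : (∑ k ∈ range ((m + 1) / 2 + 1),
        q ^ (k * (k + 1) / 2) * qbinom q (m + 1 - k) k * s ^ k * x ^ (m + 1 - 2 * k))
      = ∑ k ∈ range (m / 2 + 1 + 1),
        q ^ (k * (k + 1) / 2) * qbinom q (m + 1 - k) k * s ^ k * x ^ (m + 1 - 2 * k) := by
    apply Finset.sum_subset
    · apply Finset.range_subset_range.mpr; omega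
    · intro k hk hk2
      rw [Finset.mem_range] at hk
      rw [Finset.mem_range] at hk2
      have : qbinom q (m + 1 - k) k = 0 := qbinom_of_lt (by omega)
      rw [this]; ring
  rw [hext, Finset.sum_range_succ']
  conv_rhs => rw [Finset.sum_range_succ']
  have key : ∀ k ∈ range (m / 2 + 1),
      q ^ ((k+1) * (k+1+1) / 2) * qbinom q (m + 2 - (k+1)) (k+1) * s ^ (k+1) * x ^ (m + 2 - 2 * (k+1))
      = x * (q ^ ((k+1) * (k+1+1) / 2) * qbinom q (m + 1 - (k+1)) (k+1) * s ^ (k+1) * x ^ (m + 1 - 2 * (k+1)))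
        + q ^ (m + 1) * s * (q ^ (k * (k + 1) / 2) * qbinom q (m - k) k * (s / q) ^ k * x ^ (m - 2 * k)) := by
    intro k hk
    rw [Finset.mem_range] at hk
    have h2k : 2 * k ≤ m := by omega
    have e1 : m + 2 - (k + 1) = (m - k) + 1 := by omega
    have e2 : m + 1 - (k + 1) = m - k := by omega
    have e3 : m + 2 - 2 * (k + 1) = m - 2 * k := by omega
    rw [e1, e2, e3, pascal1 (m - k) k]
    have e4 : m - k - k = m - 2 * k := by omega
    rw [e4, Tsucc, pow_add]
    have hqm : (q : K) ^ (m + 1) = q ^ (m - 2 * k) * q ^ k * q ^ k * q := by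
      have hm1 : m + 1 = (m - 2 * k) + k + k + 1 := by omega
      rw [hm1, pow_add, pow_add, pow_add, pow_one]
    rw [hqm, div_pow]
    rcases Nat.lt_or_ge (2 * k) m with hlt | hge
    · have e5 : m + 1 - 2 * (k + 1) = m - 2 * k - 1 := by omega
      have e6 : x ^ (m - 2 * k) = x ^ (m - 2 * k - 1) * x := by
        rw [← pow_succ]; congr 1; omega
      rw [e5, e6]
      have hqk : (q : K) ^ k ≠ 0 := pow_ne_zero _ q_ne
      field_simp
      ring
    · have hm : m = 2 * k := by omega
      have hB1 : qbinom q (m - k) (k + 1) = 0 := qbinom_of_lt (by omega)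
      rw [hB1]
      have e7 : m - 2 * k = 0 := by omega
      rw [e7]
      have hqk : (q : K) ^ k ≠ 0 := pow_ne_zero _ q_ne
      field_simp
      ring
  rw [Finset.sum_congr rfl key, Finset.sum_add_distrib, ← Finset.mul_sum, ← Finset.mul_sum]
  simp only [Nat.zero_mul, Nat.zero_div, pow_zero, Nat.sub_zero, Nat.mul_zero, qbinom_zero,
    one_mul, mul_one]
  ring

lemma qF_rec2 (x s : K) (m : ℕ) :
    qF q x s (m + 3) =
      x * qF q x (q * s) (m + 2) + q * s * qF q x (q * s) (m + 1) := by
  simp only [qF]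
  have hN : (m + 2) / 2 = m / 2 + 1 := by omega
  rw [hN]
  have hext : (∑ k ∈ range ((m + 1) / 2 + 1),
        q ^ (k * (k + 1) / 2) * qbinom q (m + 1 - k) k * (q * s) ^ k * x ^ (m + 1 - 2 * k))
      = ∑ k ∈ range (m / 2 + 1 + 1),
        q ^ (k * (k + 1) / 2) * qbinom q (m + 1 - k) k * (q * s) ^ k * x ^ (m + 1 - 2 * k) := by
    apply Finset.sum_subset
    · apply Finset.range_subset_range.mpr; omega
    · intro k hk hk2
      rw [Finset.mem_range] at hk
      rw [Finset.mem_range] at hk2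
      have : qbinom q (m + 1 - k) k = 0 := qbinom_of_lt (by omega)
      rw [this]; ring
  rw [hext, Finset.sum_range_succ']
  conv_rhs => rw [Finset.sum_range_succ']
  have key : ∀ k ∈ range (m / 2 + 1),
      q ^ ((k+1) * (k+1+1) / 2) * qbinom q (m + 2 - (k+1)) (k+1) * s ^ (k+1) * x ^ (m + 2 - 2 * (k+1))
      = x * (q ^ ((k+1) * (k+1+1) / 2) * qbinom q (m + 1 - (k+1)) (k+1) * (q * s) ^ (k+1) * x ^ (m + 1 - 2 * (k+1)))
        + q * s * (q ^ (k * (k + 1) / 2) * qbinom q (m - k) k * (q * s) ^ k * x ^ (m - 2 * k)) := by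
    intro k hk
    rw [Finset.mem_range] at hk
    have h2k : 2 * k ≤ m := by omega
    have e1 : m + 2 - (k + 1) = (m - k) + 1 := by omega
    have e2 : m + 1 - (k + 1) = m - k := by omega
    have e3 : m + 2 - 2 * (k + 1) = m - 2 * k := by omega
    rw [e1, e2, e3, pascal2 (m - k) k, Tsucc, pow_add, mul_pow, mul_pow]
    rcases Nat.lt_or_ge (2 * k) m with hlt | hge
    · have e5 : m + 1 - 2 * (k + 1) = m - 2 * k - 1 := by omega
      have e6 : x ^ (m - 2 * k) = x ^ (m - 2 * k - 1) * x := by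
        rw [← pow_succ]; congr 1; omega
      rw [e5, e6]
      ring
    · have hB1 : qbinom q (m - k) (k + 1) = 0 := qbinom_of_lt (by omega)
      rw [hB1]
      ring
  rw [Finset.sum_congr rfl key, Finset.sum_add_distrib, ← Finset.mul_sum, ← Finset.mul_sum]
  simp only [Nat.zero_mul, Nat.zero_div, pow_zero, Nat.sub_zero, Nat.mul_zero, qbinom_zero,
    one_mul, mul_one]
  ring

lemma qbinom_self (n : ℕ) : qbinom q n n = 1 := by
  rw [qbinom, if_pos (le_refl n), Nat.sub_self]
  have h0 : qfact q 0 = 1 := by simp [qfact]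
  rw [h0, mul_one, div_self (qfact_ne n)]

lemma qb21 : qbinom q 2 1 = 1 + q := by
  rw [qbinom, if_pos (by omega)]
  have h1 : qfact q 1 = 1 := by simp [qfact, qint]
  have h2 : qfact q 2 = 1 + q := by
    simp [qfact, qint, Finset.prod_range_succ, Finset.sum_range_succ]
  norm_num [h1, h2]

lemma f0 : qF q 1 (-1 / q) 0 = 0 := rfl

lemma f1 : qF q 1 (-1 / q) 1 = 1 := by
  show (∑ k ∈ range (0 / 2 + 1), q ^ (k * (k + 1) / 2) * qbinom q (0 - k) k * (-1/q) ^ k * (1:K) ^ (0 - 2 * k)) = 1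
  simp [qbinom_zero]

lemma f2 : qF q 1 (-1 / q) 2 = 1 := by
  show (∑ k ∈ range (1 / 2 + 1), q ^ (k * (k + 1) / 2) * qbinom q (1 - k) k * (-1/q) ^ k * (1:K) ^ (1 - 2 * k)) = 1
  simp [qbinom_zero]

lemma f3 : qF q 1 (-1 / q) 3 = 0 := by
  show (∑ k ∈ range (2 / 2 + 1), q ^ (k * (k + 1) / 2) * qbinom q (2 - k) k * (-1/q) ^ k * (1:K) ^ (2 - 2 * k)) = 0
  rw [show (2:ℕ)/2 + 1 = 2 from rfl, Finset.sum_range_succ, Finset.sum_range_one]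
  norm_num [qbinom_zero, qbinom_self]
  have hq : (q : K) ≠ 0 := q_ne
  field_simp
  ring

lemma f4 : qF q 1 (-1 / q) 4 = -q := by
  show (∑ k ∈ range (3 / 2 + 1), q ^ (k * (k + 1) / 2) * qbinom q (3 - k) k * (-1/q) ^ k * (1:K) ^ (3 - 2 * k)) = -q
  rw [show (3:ℕ)/2 + 1 = 2 from rfl, Finset.sum_range_succ, Finset.sum_range_one]
  norm_num [qbinom_zero, qb21]
  have hq : (q : K) ≠ 0 := q_ne
  field_simp
  ring

lemma comb (m : ℕ) :
    qF q 1 (-1 / q) (m + 5) = qF q 1 (-1 / q) (m + 4)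
      - q ^ (m + 2) * qF q 1 (-1 / q) (m + 2) + q ^ (m + 1) * qF q 1 (-1 / q) (m + 1) := by
  have A := qF_rec1 1 (-1 / q) (m + 2)
  simp only [Nat.add_assoc] at A
  norm_num at A
  have B := qF_rec2 1 (-1 / q / q) m
  have hq : (q : K) ≠ 0 := q_ne
  have hs : q * (-1 / q / q) = -1 / q := by
    field_simp
  rw [hs] at B
  rw [A, B]
  have hp3 : (q : K) ^ (m + 3) = q ^ (m + 1) * q * q := by rw [pow_succ, pow_succ]
  have hp2 : (q : K) ^ (m + 2) = q ^ (m + 1) * q := by rw [pow_succ]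
  rw [hp3, hp2]
  field_simp
  ring

lemma comb0 (m : ℕ) :
    qF q 1 (-1 / q) (m + 4) = qF q 1 (-1 / q) (m + 3)
      - q ^ (m + 1) * qF q 1 (-1 / q) (m + 1) + q ^ m * qF q 1 (-1 / q) m := by
  cases m with
  | zero =>
    norm_num [f0, f1, f3, f4]
  | succ k =>
    have h := comb k
    have e1 : k + 1 + 4 = k + 5 := by omega
    have e2 : k + 1 + 3 = k + 4 := by omega
    have e3 : k + 1 + 1 = k + 2 := by omega
    rw [e1, e2, e3, h]

lemma E1 (n : ℕ) : (n + 1) * (3 * (n + 1) - 1) / 2 = n * (3 * n - 1) / 2 + (3 * n + 1) := by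
  have key : (n + 1) * (3 * (n + 1) - 1) = n * (3 * n - 1) + (6 * n + 2) := by
    cases n with
    | zero => norm_num
    | succ k =>
      have a1 : 3 * (k + 1 + 1) - 1 = 3 * k + 5 := by omega
      have a2 : 3 * (k + 1) - 1 = 3 * k + 2 := by omega
      rw [a1, a2]; ring
  set A := n * (3 * n - 1) with hA
  set B := (n + 1) * (3 * (n + 1) - 1) with hB
  omega

lemma E2 (n : ℕ) : (n + 1) * (3 * (n + 1) + 1) / 2 = n * (3 * n + 1) / 2 + (3 * n + 2) := by
  have key : (n + 1) * (3 * (n + 1) + 1) = n * (3 * n + 1) + (6 * n + 4) := by ring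
  set A := n * (3 * n + 1) with hA
  set B := (n + 1) * (3 * (n + 1) + 1) with hB
  omega

lemma main (n : ℕ) :
    qF q 1 (-1 / q) (3 * n) = 0 ∧
    qF q 1 (-1 / q) (3 * n + 1) = (-1 : K) ^ n * q ^ (n * (3 * n - 1) / 2) ∧
    qF q 1 (-1 / q) (3 * n + 2) = (-1 : K) ^ n * q ^ (n * (3 * n + 1) / 2) ∧
    qF q 1 (-1 / q) (3 * n + 3) = 0 := by
  induction n with
  | zero =>
    refine ⟨?_, ?_, ?_, ?_⟩ <;> norm_num [f0, f1, f2, f3]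
  | succ n ih =>
    obtain ⟨h0, h1, h2, h3⟩ := ih
    have g1 : qF q 1 (-1 / q) (3 * n + 4)
        = (-1 : K) ^ (n + 1) * q ^ ((n + 1) * (3 * (n + 1) - 1) / 2) := by
      rw [comb0 (3 * n), h3, h1, h0, E1, pow_add]
      ring
    have g2 : qF q 1 (-1 / q) (3 * n + 5)
        = (-1 : K) ^ (n + 1) * q ^ ((n + 1) * (3 * (n + 1) + 1) / 2) := by
      have hc := comb0 (3 * n + 1)
      rw [show 3 * n + 1 + 4 = 3 * n + 5 by omega, show 3 * n + 1 + 3 = 3 * n + 4 by omega,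
        show 3 * n + 1 + 1 = 3 * n + 2 by omega] at hc
      rw [hc, g1, h2, h1, E1, E2, pow_add, pow_add]
      ring
    have g3 : qF q 1 (-1 / q) (3 * n + 6) = 0 := by
      have hc := comb0 (3 * n + 2)
      rw [show 3 * n + 2 + 4 = 3 * n + 6 by omega, show 3 * n + 2 + 3 = 3 * n + 5 by omega,
        show 3 * n + 2 + 1 = 3 * n + 3 by omega] at hc
      rw [hc, g2, h3, h2, E2, pow_add]
      ring
    refine ⟨?_, ?_, ?_, ?_⟩
    · rw [show 3 * (n + 1) = 3 * n + 3 by ring]; exact h3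
    · rw [show 3 * (n + 1) + 1 = 3 * n + 4 by ring]; exact g1
    · rw [show 3 * (n + 1) + 2 = 3 * n + 5 by ring]; exact g2
    · rw [show 3 * (n + 1) + 3 = 3 * n + 6 by ring]; exact g3

private theorem stmt15_aux (n : ℕ) :
    qF q 1 (-1 / q) (3 * n) = 0 ∧
    qF q 1 (-1 / q) (3 * n + 1) = (-1 : K) ^ n * q ^ (n * (3 * n - 1) / 2) ∧
    qF q 1 (-1 / q) (3 * n + 2) = (-1 : K) ^ n * q ^ (n * (3 * n + 1) / 2) :=
  ⟨(main n).1, (main n).2.1, (main n).2.2.1⟩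

theorem stmt15 (n : ℕ) :
    qF q 1 (-1 / q) (3 * n) = 0 ∧
    qF q 1 (-1 / q) (3 * n + 1) = (-1 : K) ^ n * q ^ (n * (3 * n - 1) / 2) ∧
    qF q 1 (-1 / q) (3 * n + 2) = (-1 : K) ^ n * q ^ (n * (3 * n + 1) / 2) := stmt15_aux n
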